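/- Let G = (V, E) be a connected multigraph, f a divisor on G, and M a positive integer with M > dist_rec_G(f) + max{0, max_{v ∈ V}(f(v) − d_G(v))}; let G' and f' be as in the apex construction. Then dist_rec_G(f) ≤ dist_nonhalt_{G'}(f'). -/

import Mathlib

attribute [local instance 2000] instBEqOfDecidableEq

variable {V : Type*} [Fintype V] [DecidableEq V]

/-- The degree of vertex `v` in the multigraph with edge-multiplicity function `m`. -/
def mgDeg (m : V → V → ℕ) (v : V) : ℕ := ∑ u, m v u

/-- The divisor obtained from `f` by firing vertex `v`. -/
def mgFire (m : V → V → ℕ) (f : V → ℤ) (v : V) : V → ℤ :=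
  fun u => if u = v then f v - mgDeg m v else f u + m v u

/-- The divisor obtained from `f` by firing the vertices of `L` in order. -/
def mgPlay (m : V → V → ℕ) (f : V → ℤ) (L : List V) : V → ℤ :=
  L.foldl (mgFire m) f

/-- `L` is a legal game from `f`: each fired vertex is active when fired. -/
def mgLegal (m : V → V → ℕ) : (V → ℤ) → List V → Prop
  | _, [] => True
  | f, v :: L => ((mgDeg m v : ℤ) ≤ f v) ∧ mgLegal m (mgFire m f v) L

/-- A divisor is stable if no vertex is active. -/
def mgStable (m : V → V → ℕ) (f : V → ℤ) : Prop := ∀ v, f v < (mgDeg m v : ℤ)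

/-- A divisor is halting if some legal game from it ends at a stable divisor. -/
def mgHalting (m : V → V → ℕ) (f : V → ℤ) : Prop :=
  ∃ L : List V, mgLegal m f L ∧ mgStable m (mgPlay m f L)

/-- A divisor is recurrent if some non-empty legal game from it leads back to it. -/
def mgRecurrent (m : V → V → ℕ) (f : V → ℤ) : Prop :=
  ∃ L : List V, L ≠ [] ∧ mgLegal m f L ∧ mgPlay m f L = f

/-- A divisor is effective if it is nonnegative everywhere. -/
def mgEffective (f : V → ℤ) : Prop := ∀ v, 0 ≤ f v

/-- The degree of a divisor. -/
def mgDegDiv (f : V → ℤ) : ℤ := ∑ v, f v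

/-- Distance of a divisor from a recurrent state. -/
noncomputable def mgDistRec (m : V → V → ℕ) (f : V → ℤ) : ℕ :=
  sInf {n : ℕ | ∃ g : V → ℤ, mgEffective g ∧ mgDegDiv g = (n : ℤ) ∧ mgRecurrent m (f + g)}

/-- Distance of a divisor from a non-halting state. -/
noncomputable def mgDistNonhalt (m : V → V → ℕ) (f : V → ℤ) : ℕ :=
  sInf {n : ℕ | ∃ g : V → ℤ, mgEffective g ∧ mgDegDiv g = (n : ℤ) ∧ ¬ mgHalting m (f + g)}

/-- A multigraph is connected if any two vertices are joined by a path of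
positive-multiplicity edges. -/
def mgConnected (m : V → V → ℕ) : Prop :=
  ∀ u v : V, Relation.ReflTransGen (fun a b => 0 < m a b) u v

/-- `f` and `g` are linearly equivalent: `f` can be transformed to `g` by firings. -/
def mgLinEquiv (m : V → V → ℕ) (f g : V → ℤ) : Prop :=
  ∃ L : List V, mgPlay m f L = g

/-- A divisor is winnable if it is linearly equivalent to an effective divisor. -/
def mgWinnable (m : V → V → ℕ) (f : V → ℤ) : Prop :=
  ∃ g : V → ℤ, mgEffective g ∧ mgLinEquiv m f g

/-- The rank of a divisor. -/
noncomputable def mgRank (m : V → V → ℕ) (f : V → ℤ) : ℤ :=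
  ((sInf {n : ℕ | ∃ g : V → ℤ, mgEffective g ∧ mgDegDiv g = (n : ℤ) ∧
    ¬ mgWinnable m (f - g)} : ℕ) : ℤ) - 1

/-- Edge multiplicities of the apex construction: the edges of `G` (on the `some`
vertices) together with `M` parallel edges between the new vertex `none` and each
original vertex. -/
def apexM (m : V → V → ℕ) (M : ℕ) : Option V → Option V → ℕ
  | some u, some v => m u v
  | some _, none => M
  | none, some _ => M
  | none, none => 0

/-- The divisor `f\'` of the apex construction: `f\'(v) = f(v) + M` on original
vertices and `f\'(v_new) = 0`. -/
def apexF (f : V → ℤ) (M : ℕ) : Option V → ℤ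
  | some v => f v + M
  | none => 0

/- ----------------------------------------------------------------- -/
/- Auxiliary lemmas                                                   -/
/- ----------------------------------------------------------------- -/

lemma mgPlay_nil (m : V → V → ℕ) (f : V → ℤ) : mgPlay m f [] = f := rfl

lemma mgPlay_cons (m : V → V → ℕ) (f : V → ℤ) (v : V) (L : List V) :
    mgPlay m f (v :: L) = mgPlay m (mgFire m f v) L := rfl

lemma mgPlay_append (m : V → V → ℕ) (f : V → ℤ) (L₁ L₂ : List V) :
    mgPlay m f (L₁ ++ L₂) = mgPlay m (mgPlay m f L₁) L₂ := by
  simp [mgPlay, List.foldl_append]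

lemma mgLegal_append {m : V → V → ℕ} {f : V → ℤ} {L₁ L₂ : List V} :
    mgLegal m f (L₁ ++ L₂) ↔ mgLegal m f L₁ ∧ mgLegal m (mgPlay m f L₁) L₂ := by
  induction L₁ generalizing f with
  | nil => simp [mgLegal, mgPlay]
  | cons x T ih =>
    simp only [List.cons_append, mgLegal, mgPlay_cons, List.append_eq, ih, and_assoc]

lemma mgLegal_decomp {m : V → V → ℕ} {f : V → ℤ} {L : List V} :
    mgLegal m f L ↔
      ∀ A v B, L = A ++ v :: B → (mgDeg m v : ℤ) ≤ mgPlay m f A v := by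
  induction L generalizing f with
  | nil =>
    constructor
    · intro _ A v B h; exact absurd h (by simp)
    · intro _; trivial
  | cons x T ih =>
    constructor
    · rintro ⟨h1, h2⟩ A v B hL
      cases A with
      | nil =>
        simp only [List.nil_append, List.cons.injEq] at hL
        obtain ⟨rfl, rfl⟩ := hL
        simpa [mgPlay] using h1
      | cons a A' =>
        simp only [List.cons_append, List.cons.injEq] at hL
        obtain ⟨rfl, hT⟩ := hL
        have := (ih).mp h2 A' v B hT
        simpa [mgPlay_cons] using this
    · intro h
      refine ⟨?_, ?_⟩
      · simpa [mgPlay] using h [] x T rfl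
      · refine (ih).mpr ?_
        intro A v B hT
        have := h (x :: A) v B (by rw [hT]; rfl)
        simpa [mgPlay_cons] using this

lemma mgPlay_count (m : V → V → ℕ) (hloop : ∀ v, m v v = 0) (f : V → ℤ) (L : List V)
    (u : V) :
    mgPlay m f L u =
      f u + (∑ w, (L.count w : ℤ) * (m w u : ℤ)) - (L.count u : ℤ) * (mgDeg m u : ℤ) := by
  induction L generalizing f with
  | nil => simp [mgPlay]
  | cons x T ih =>
    have hcount : ∀ w : V, ((x :: T).count w : ℤ) = (T.count w : ℤ) + if x = w then 1 else 0 := by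
      intro w
      rw [List.count_cons]
      push_cast [beq_iff_eq]
      ring
    have hsum : (∑ w, ((x :: T).count w : ℤ) * (m w u : ℤ))
        = (∑ w, (T.count w : ℤ) * (m w u : ℤ)) + (m x u : ℤ) := by
      rw [Finset.sum_congr rfl (fun w _ => by rw [hcount w, add_mul])]
      rw [Finset.sum_add_distrib]
      congr 1
      rw [Finset.sum_congr rfl (fun w _ => by rw [ite_mul, one_mul, zero_mul])]
      rw [Finset.sum_ite_eq]
      simp
    rw [mgPlay_cons, ih, hsum, hcount u]
    by_cases hux : u = x
    · have h1 : mgFire m f x u = f u - mgDeg m u := by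
        rw [hux]; simp [mgFire]
      rw [h1, if_pos hux.symm]
      have h0 : (m x u : ℤ) = 0 := by rw [hux, hloop x]; norm_num
      rw [h0]
      ring
    · have h1 : mgFire m f x u = f u + m x u := by simp [mgFire, hux]
      rw [h1, if_neg (fun h => hux h.symm)]
      ring

lemma mg_sum_count (L : List V) : ∑ w, L.count w = L.length := by
  induction L with
  | nil => simp
  | cons x T ih =>
    have h : ∀ w : V, (x :: T).count w = T.count w + if x = w then 1 else 0 := by
      intro w; rw [List.count_cons]; simp [beq_iff_eq]
    rw [Finset.sum_congr rfl (fun w _ => h w), Finset.sum_add_distrib, ih,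
      Finset.sum_ite_eq]
    simp

lemma mgDegDiv_fire (m : V → V → ℕ) (hloop : ∀ v, m v v = 0) (f : V → ℤ) (v : V) :
    mgDegDiv (mgFire m f v) = mgDegDiv f := by
  unfold mgDegDiv mgFire
  have h : ∀ u : V, (if u = v then f v - (mgDeg m v : ℤ) else f u + m v u)
      = f u + (m v u : ℤ) - (if u = v then (mgDeg m v : ℤ) else 0) := by
    intro u
    by_cases huv : u = v
    · rw [if_pos huv, if_pos huv, huv]
      have h0 : (m v v : ℤ) = 0 := by rw [hloop v]; norm_num
      rw [h0]
      ring
    · rw [if_neg huv, if_neg huv]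
      ring
  rw [Finset.sum_congr rfl (fun u _ => h u)]
  have hdeg : (∑ u, (m v u : ℤ)) = (mgDeg m v : ℤ) := by
    unfold mgDeg; push_cast; rfl
  rw [Finset.sum_sub_distrib, Finset.sum_add_distrib, hdeg]
  simp

lemma mgDegDiv_play (m : V → V → ℕ) (hloop : ∀ v, m v v = 0) (f : V → ℤ) (L : List V) :
    mgDegDiv (mgPlay m f L) = mgDegDiv f := by
  induction L generalizing f with
  | nil => rfl
  | cons x T ih => rw [mgPlay_cons, ih, mgDegDiv_fire m hloop]

lemma apex_loop (m : V → V → ℕ) (M : ℕ) (hloop : ∀ v, m v v = 0) :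
    ∀ u : Option V, apexM m M u u = 0 := by
  intro u
  cases u with
  | none => rfl
  | some v => exact hloop v

lemma apex_deg_some (m : V → V → ℕ) (M : ℕ) (v : V) :
    mgDeg (apexM m M) (some v) = mgDeg m v + M := by
  unfold mgDeg
  rw [Fintype.sum_option]
  have h1 : apexM m M (some v) none = M := rfl
  have h2 : ∀ u : V, apexM m M (some v) (some u) = m v u := fun _ => rfl
  rw [h1, Finset.sum_congr rfl (fun u _ => h2 u)]
  ring

lemma apex_deg_none (m : V → V → ℕ) (M : ℕ) :
    mgDeg (apexM m M) (none : Option V) = Fintype.card V * M := by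
  unfold mgDeg
  rw [Fintype.sum_option]
  have h1 : apexM m M none none = 0 := rfl
  have h2 : ∀ u : V, apexM m M none (some u) = M := fun _ => rfl
  rw [h1, Finset.sum_congr rfl (fun u _ => h2 u)]
  simp [Finset.card_univ, mul_comm]

/-- `dist_rec_G(f) ≤ dist_nonhalt_{G'}(f')` for the apex construction. -/
theorem stmt15 [Nonempty V] (m : V → V → ℕ) (hsymm : ∀ u v, m u v = m v u)
    (hloop : ∀ v, m v v = 0) (hconn : mgConnected m) (f : V → ℤ) (M : ℕ)
    (hMpos : 0 < M)
    (hM : (mgDistRec m f : ℤ) +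
        max 0 (Finset.univ.sup' Finset.univ_nonempty (fun v => f v - (mgDeg m v : ℤ)))
      < (M : ℤ)) :
    mgDistRec m f ≤ mgDistNonhalt (apexM m M) (apexF f M) := by
  classical
  set m' := apexM m M with hm'
  set f' := apexF f M with hf'
  have hloop' : ∀ u : Option V, m' u u = 0 := apex_loop m M hloop
  -- The non-halting set is nonempty.
  have hne : {n : ℕ | ∃ g : Option V → ℤ, mgEffective g ∧ mgDegDiv g = (n : ℤ) ∧
      ¬ mgHalting m' (f' + g)}.Nonempty := by
    set B : ℤ := ∑ u : Option V, (mgDeg m' u : ℤ) with hB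
    set F0 : ℤ := mgDegDiv f' with hF0
    set c : ℕ := (B - F0).toNat + 1 with hc
    set N : ℕ := Fintype.card (Option V) * c with hN
    refine ⟨N, fun _ => (c : ℤ), fun _ => by positivity, ?_, ?_⟩
    · unfold mgDegDiv
      rw [Finset.sum_const, Finset.card_univ]
      push_cast [hN]
      ring
    · rintro ⟨L, _, hstab⟩
      have hdeg : mgDegDiv (mgPlay m' (f' + fun _ => (c : ℤ)) L)
          = mgDegDiv (f' + fun _ => (c : ℤ)) := mgDegDiv_play m' hloop' _ L
      have hsum1 : mgDegDiv (f' + fun _ => (c : ℤ))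
          = F0 + (Fintype.card (Option V) : ℤ) * c := by
        rw [hF0]
        unfold mgDegDiv
        simp only [Pi.add_apply]
        rw [Finset.sum_add_distrib, Finset.sum_const, Finset.card_univ]
        push_cast
        ring
      have hsum2 : mgDegDiv (mgPlay m' (f' + fun _ => (c : ℤ)) L)
          ≤ B - (Fintype.card (Option V) : ℤ) := by
        unfold mgDegDiv
        calc ∑ u, mgPlay m' (f' + fun _ => (c : ℤ)) L u
            ≤ ∑ u : Option V, ((mgDeg m' u : ℤ) - 1) :=
              Finset.sum_le_sum (fun u _ => by linarith [hstab u])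
          _ = B - (Fintype.card (Option V) : ℤ) := by
              rw [Finset.sum_sub_distrib, Finset.sum_const, Finset.card_univ]
              simp [hB]
      have hcard1 : (1 : ℤ) ≤ (Fintype.card (Option V) : ℤ) := by
        have : 0 < Fintype.card (Option V) := Fintype.card_pos
        exact_mod_cast this
      have hcge : (B - F0) ≤ ((B - F0).toNat : ℤ) := Int.self_le_toNat _
      have hcpos : (0 : ℤ) ≤ (c : ℤ) := by positivity
      have hcc : B - F0 + 1 ≤ (c : ℤ) := by
        rw [hc]; push_cast; linarith
      have hprod : (c : ℤ) ≤ (Fintype.card (Option V) : ℤ) * c := by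
        nlinarith
      rw [hdeg, hsum1] at hsum2
      linarith
  -- Take the optimal `g'`.
  have hmem := Nat.sInf_mem hne
  set n := mgDistNonhalt m' f' with hn
  obtain ⟨g', hg'eff, hg'deg, hg'nh⟩ : ∃ g : Option V → ℤ, mgEffective g ∧
      mgDegDiv g = (n : ℤ) ∧ ¬ mgHalting m' (f' + g) := hmem
  by_contra hcon
  push_neg at hcon
  -- hcon : n < mgDistRec m f
  set r := mgDistRec m f with hr
  set D : ℤ := max 0 (Finset.univ.sup' Finset.univ_nonempty
      (fun v => f v - (mgDeg m v : ℤ))) with hD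
  have hD0 : (0 : ℤ) ≤ D := le_max_left _ _
  have hfD : ∀ v, f v ≤ (mgDeg m v : ℤ) + D := by
    intro v
    have h1 : f v - (mgDeg m v : ℤ) ≤ Finset.univ.sup' Finset.univ_nonempty
        (fun v => f v - (mgDeg m v : ℤ)) :=
      Finset.le_sup' (fun v => f v - (mgDeg m v : ℤ)) (Finset.mem_univ v)
    have h2 := le_max_right (0 : ℤ) (Finset.univ.sup' Finset.univ_nonempty
        (fun v => f v - (mgDeg m v : ℤ)))
    linarith
  have hnr : (n : ℤ) + 1 ≤ (r : ℤ) := by exact_mod_cast hcon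
  have hgv_le : ∀ u : Option V, g' u ≤ (n : ℤ) := by
    intro u
    calc g' u ≤ ∑ w : Option V, g' w :=
          Finset.single_le_sum (fun w _ => hg'eff w) (Finset.mem_univ u)
      _ = (n : ℤ) := hg'deg
  have hkey : ∀ v, f v + g' (some v) < (mgDeg m v : ℤ) + M := by
    intro v
    have h1 := hfD v
    have h2 := hgv_le (some v)
    linarith
  have hgnone_lt : g' none < (M : ℤ) := by
    have := hgv_le none
    linarith
  set h₀ : Option V → ℤ := f' + g' with hh₀
  have hh₀some : ∀ v, h₀ (some v) = f v + M + g' (some v) := by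
    intro v
    show f' (some v) + g' (some v) = _
    rw [hf']
    show f v + M + g' (some v) = _
    ring
  have hh₀none : h₀ none = g' none := by
    show f' none + g' none = g' none
    rw [hf']
    show (0 : ℤ) + g' none = g' none
    ring
  -- chips formulas
  have hcount_some : ∀ (A : List V) (w : V), (A.map some).count (some w) = A.count w := by
    intro A w
    induction A with
    | nil => simp
    | cons a T ih =>
      rw [List.map_cons, List.count_cons, List.count_cons, ih]
      congr 1
      simp
  have hcount_none : ∀ A : List V, (A.map some).count (none : Option V) = 0 := by
    intro A
    rw [List.count_eq_zero]
    simp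
  have hplay_some : ∀ (A : List V) (v : V),
      mgPlay m' h₀ (A.map some) (some v) =
        f v + M + g' (some v) + (∑ w, (A.count w : ℤ) * (m w v : ℤ))
          - (A.count v : ℤ) * ((mgDeg m v : ℤ) + M) := by
    intro A v
    rw [mgPlay_count m' hloop' h₀ (A.map some) (some v)]
    rw [hh₀some v]
    have hsplit : (∑ u : Option V, ((A.map some).count u : ℤ) * (m' u (some v) : ℤ))
        = ∑ w : V, (A.count w : ℤ) * (m w v : ℤ) := by
      rw [Fintype.sum_option]
      rw [hcount_none A]
      simp only [Nat.cast_zero, zero_mul, zero_add]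
      refine Finset.sum_congr rfl (fun w _ => ?_)
      rw [hcount_some A w]
      rfl
    rw [hsplit, hcount_some A v, apex_deg_some m M v]
    push_cast
    ring
  have hplay_none : ∀ A : List V,
      mgPlay m' h₀ (A.map some) none = g' none + (M : ℤ) * A.length := by
    intro A
    rw [mgPlay_count m' hloop' h₀ (A.map some) none]
    rw [hh₀none, hcount_none A]
    have hsplit : (∑ u : Option V, ((A.map some).count u : ℤ) * (m' u none : ℤ))
        = (M : ℤ) * A.length := by
      rw [Fintype.sum_option]
      rw [hcount_none A]
      simp only [Nat.cast_zero, zero_mul, zero_add]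
      have : ∀ w : V, ((A.map some).count (some w) : ℤ) * (m' (some w) none : ℤ)
          = (M : ℤ) * (A.count w : ℤ) := by
        intro w
        rw [hcount_some A w]
        have : m' (some w) none = M := rfl
        rw [this]
        ring
      rw [Finset.sum_congr rfl (fun w _ => this w)]
      rw [← Finset.mul_sum]
      congr 1
      rw [← mg_sum_count A]
      push_cast
      rfl
    rw [hsplit]
    simp
  -- V-only legal games have no repeats
  have hnodup : ∀ L : List V, mgLegal m' h₀ (L.map some) → L.Nodup := by
    intro L
    induction L using List.reverseRecOn with
    | nil => intro _; simp
    | append_singleton A v ihA =>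
      intro hL
      have hmap : (A ++ [v]).map some = A.map some ++ [some v] := by simp
      rw [hmap] at hL
      have hA : mgLegal m' h₀ (A.map some) := (mgLegal_append.mp hL).1
      have hAnd := ihA hA
      have hvA : v ∉ A := by
        by_contra hvA
        have hlast : (mgDeg m' (some v) : ℤ) ≤ mgPlay m' h₀ (A.map some) (some v) :=
          mgLegal_decomp.mp hL (A.map some) (some v) [] rfl
        rw [hplay_some A v, apex_deg_some m M v] at hlast
        push_cast at hlast
        have hc1 : (1 : ℤ) ≤ (A.count v : ℤ) := by
          have : 0 < A.count v := List.count_pos_iff.mpr hvA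
          exact_mod_cast this
        have hsumle : (∑ w, (A.count w : ℤ) * (m w v : ℤ)) ≤ (mgDeg m v : ℤ) := by
          have hle : ∀ w, (A.count w : ℤ) * (m w v : ℤ) ≤ (m w v : ℤ) := by
            intro w
            have hc : A.count w ≤ 1 := List.nodup_iff_count_le_one.mp hAnd w
            have hc' : (A.count w : ℤ) ≤ 1 := by exact_mod_cast hc
            have hm0 : (0 : ℤ) ≤ (m w v : ℤ) := by positivity
            nlinarith
          calc (∑ w, (A.count w : ℤ) * (m w v : ℤ)) ≤ ∑ w, (m w v : ℤ) :=
                Finset.sum_le_sum (fun w _ => hle w)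
            _ = ∑ w, (m v w : ℤ) := by
                refine Finset.sum_congr rfl (fun w _ => ?_)
                rw [hsymm w v]
            _ = (mgDeg m v : ℤ) := by unfold mgDeg; push_cast; rfl
        have hMd : (0 : ℤ) ≤ (mgDeg m v : ℤ) + M := by positivity
        have hcM : ((mgDeg m v : ℤ) + M) ≤ (A.count v : ℤ) * ((mgDeg m v : ℤ) + M) := by
          nlinarith
        have := hkey v
        linarith
      rw [List.nodup_append']
      exact ⟨hAnd, List.nodup_singleton v, by
        intro a ha hb
        simp only [List.mem_singleton] at hb
        subst hb
        exact hvA ha⟩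
  -- transport non-halting along legal games
  have htransport : ∀ L : List (Option V), mgLegal m' h₀ L →
      ¬ mgHalting m' (mgPlay m' h₀ L) := by
    rintro L hL ⟨L₂, hleg₂, hst⟩
    exact hg'nh ⟨L ++ L₂, mgLegal_append.mpr ⟨hL, hleg₂⟩, by
      rw [mgPlay_append]; exact hst⟩
  -- build a V-only legal game making the apex active
  have hbuild : ∀ (k : ℕ) (L : List V), mgLegal m' h₀ (L.map some) →
      Fintype.card V ≤ L.length + k →
      ∃ L' : List V, mgLegal m' h₀ (L'.map some) ∧
        (mgDeg m' (none : Option V) : ℤ) ≤ mgPlay m' h₀ (L'.map some) none := by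
    intro k
    induction k with
    | zero =>
      intro L hL hlen
      refine ⟨L, hL, ?_⟩
      rw [hplay_none L, apex_deg_none m M]
      have h1 : (Fintype.card V : ℤ) ≤ (L.length : ℤ) := by
        exact_mod_cast (by omega : Fintype.card V ≤ L.length)
      have h2 : (0 : ℤ) ≤ g' none := hg'eff none
      have h3 : (0 : ℤ) ≤ (M : ℤ) := by positivity
      push_cast
      nlinarith
    | succ k ih =>
      intro L hL hlen
      by_cases hact : (mgDeg m' (none : Option V) : ℤ) ≤ mgPlay m' h₀ (L.map some) none
      · exact ⟨L, hL, hact⟩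
      · have hnh := htransport (L.map some) hL
        have hnstable : ¬ mgStable m' (mgPlay m' h₀ (L.map some)) := by
          intro hs
          exact hnh ⟨[], trivial, hs⟩
        unfold mgStable at hnstable
        push_neg at hnstable
        obtain ⟨u, hu⟩ := hnstable
        cases u with
        | none => exact absurd hu hact
        | some x =>
          refine ih (L ++ [x]) ?_ ?_
          · have hmap : (L ++ [x]).map some = L.map some ++ [some x] := by simp
            rw [hmap]
            refine mgLegal_append.mpr ⟨hL, ?_⟩
            exact ⟨hu, trivial⟩
          · simp only [List.length_append, List.length_singleton]
            omega
  obtain ⟨L, hLleg, hLact⟩ := hbuild (Fintype.card V) [] trivial (by simp)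
  have hnd : L.Nodup := hnodup L hLleg
  -- the game length equals card V
  rw [hplay_none L, apex_deg_none m M] at hLact
  have hlen_ge : Fintype.card V ≤ L.length := by
    have hMZ : (0 : ℤ) < (M : ℤ) := by exact_mod_cast hMpos
    have h1 : (M : ℤ) * (Fintype.card V) < (M : ℤ) * (1 + L.length) := by
      push_cast at hLact ⊢
      nlinarith
    have h2 : (Fintype.card V : ℤ) < 1 + L.length := lt_of_mul_lt_mul_left h1 (le_of_lt hMZ)
    have h3 : (Fintype.card V : ℤ) ≤ (L.length : ℤ) := by linarith
    exact_mod_cast h3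
  have hlen_le : L.length ≤ Fintype.card V := hnd.length_le_card
  have hlen_eq : L.length = Fintype.card V := le_antisymm hlen_le hlen_ge
  have hmemL : ∀ v : V, v ∈ L := by
    have htf : L.toFinset = Finset.univ := by
      apply Finset.eq_univ_of_card
      rw [List.toFinset_card_of_nodup hnd, hlen_eq]
    intro v
    rw [← List.mem_toFinset, htf]
    exact Finset.mem_univ v
  have hcount1 : ∀ w : V, L.count w = 1 := by
    intro w
    have hle := List.nodup_iff_count_le_one.mp hnd w
    have hge : 0 < L.count w := List.count_pos_iff.mpr (hmemL w)
    omega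
  -- the restricted divisor
  set g : V → ℤ := fun v => g' (some v) with hg
  set d : V → ℤ := f + g with hd
  have hdv : ∀ v, d v = f v + g' (some v) := fun v => rfl
  have hplayG : ∀ (A : List V) (v : V),
      mgPlay m d A v = f v + g' (some v) + (∑ w, (A.count w : ℤ) * (m w v : ℤ))
        - (A.count v : ℤ) * (mgDeg m v : ℤ) := by
    intro A v
    rw [mgPlay_count m hloop d A v, hdv v]
  -- the cycle returns to d
  have hcycle_play : mgPlay m d L = d := by
    funext u
    rw [hplayG L u]
    have hsum : (∑ w, (L.count w : ℤ) * (m w u : ℤ)) = (mgDeg m u : ℤ) := by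
      calc (∑ w, (L.count w : ℤ) * (m w u : ℤ)) = ∑ w, (m w u : ℤ) := by
            refine Finset.sum_congr rfl (fun w _ => ?_)
            rw [hcount1 w]
            push_cast
            ring
        _ = ∑ w, (m u w : ℤ) := by
            refine Finset.sum_congr rfl (fun w _ => ?_)
            rw [hsymm w u]
        _ = (mgDeg m u : ℤ) := by unfold mgDeg; push_cast; rfl
    rw [hsum, hcount1 u, hdv u]
    push_cast
    ring
  -- the cycle is legal in G
  have hcycle_leg : mgLegal m d L := by
    refine mgLegal_decomp.mpr ?_
    intro A v B hLdec
    have hmap : L.map some = A.map some ++ (some v) :: B.map some := by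
      rw [hLdec]; simp
    have hlast := mgLegal_decomp.mp hLleg (A.map some) (some v) (B.map some) hmap
    rw [hplay_some A v, apex_deg_some m M v] at hlast
    have hvA : v ∉ A := by
      rw [hLdec] at hnd
      rcases List.nodup_append'.mp hnd with ⟨_, _, hdisj⟩
      intro hvmem
      exact hdisj hvmem List.mem_cons_self
    have hcv : A.count v = 0 := List.count_eq_zero.mpr hvA
    rw [hplayG A v, hcv]
    rw [hcv] at hlast
    push_cast at hlast ⊢
    linarith
  have hLne : L ≠ [] := by
    have : 0 < L.length := by
      rw [hlen_eq]
      exact Fintype.card_pos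
    exact List.ne_nil_of_length_pos this
  have hrec : mgRecurrent m (f + g) := ⟨L, hLne, hcycle_leg, hcycle_play⟩
  -- conclude
  have hgsum_nonneg : (0 : ℤ) ≤ ∑ v, g v := Finset.sum_nonneg (fun v _ => hg'eff (some v))
  set n₁ : ℕ := (∑ v, g v).toNat with hn₁
  have hn₁eq : ((n₁ : ℕ) : ℤ) = ∑ v, g v := Int.toNat_of_nonneg hgsum_nonneg
  have hmem₁ : n₁ ∈ {k : ℕ | ∃ g : V → ℤ, mgEffective g ∧ mgDegDiv g = (k : ℤ) ∧
      mgRecurrent m (f + g)} :=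
    ⟨g, fun v => hg'eff (some v), by rw [hn₁eq]; rfl, hrec⟩
  have hr_le : r ≤ n₁ := Nat.sInf_le hmem₁
  have hsplit : (n : ℤ) = g' none + ∑ v, g v := by
    rw [← hg'deg]
    unfold mgDegDiv
    rw [Fintype.sum_option]
  have hn₁_le : (n₁ : ℤ) ≤ (n : ℤ) := by
    rw [hn₁eq, hsplit]
    have := hg'eff none
    linarith
  have hn₁_le' : n₁ ≤ n := by exact_mod_cast hn₁_le
  omega
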